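/- Let ρ^{AQ} be a separable density operator on H_A ⊗ H_Q, let {E_i^A}_{i=1}^M be a POVM on A with Tr[E_i^A ρ^A] = 1/M for each i, and {E_i^Q} positive operators on Q with Σᵢ E_i^Q ≤ I. Then for any real γ, Σ_{i=1}^M Tr[(E_i^A ⊗ E_i^Q) ρ^{AQ}] ≤ Tr[{Π(γ) ≥ 0}Π(γ)] + e^{γ}/M · Σᵢ Tr[E_i^Q ρ^Q] ≤ Tr[{Π(γ) ≥ 0}Π(γ)] + e^{γ}/M, where Π(γ) = ρ^{AQ} − e^{γ} ρ^A ⊗ ρ^Q and ρ^A, ρ^Q are the marginals. -/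

import Mathlib

open Matrix Kronecker BigOperators
open scoped ComplexOrder

/-- Projection onto the nonnegative eigenspace of a Hermitian matrix
(junk value `0` if the matrix is not Hermitian). -/
noncomputable def posProj {n : Type*} [Fintype n] [DecidableEq n]
    (X : Matrix n n ℂ) : Matrix n n ℂ :=
  if hX : X.IsHermitian then
    (hX.eigenvectorUnitary : Matrix n n ℂ) *
      Matrix.diagonal (fun i => if (0:ℝ) ≤ hX.eigenvalues i then (1:ℂ) else 0) *
      star (hX.eigenvectorUnitary : Matrix n n ℂ)
  else 0

/-- Functional calculus logarithm of a Hermitian matrix, with the convention `log 0 = 0`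
(junk value `0` if the matrix is not Hermitian). -/
noncomputable def matLog {n : Type*} [Fintype n] [DecidableEq n]
    (M : Matrix n n ℂ) : Matrix n n ℂ :=
  if hM : M.IsHermitian then
    (hM.eigenvectorUnitary : Matrix n n ℂ) *
      Matrix.diagonal (fun i => (Real.log (hM.eigenvalues i) : ℂ)) *
      star (hM.eigenvectorUnitary : Matrix n n ℂ)
  else 0

/-- von Neumann entropy `-Tr[M log M] = -∑ λᵢ log λᵢ` (convention `0 log 0 = 0`). -/
noncomputable def vNEntropy {n : Type*} [Fintype n] [DecidableEq n]
    (M : Matrix n n ℂ) : ℝ :=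
  if hM : M.IsHermitian then -∑ i, hM.eigenvalues i * Real.log (hM.eigenvalues i) else 0

/-- A density operator: positive semidefinite with unit trace. -/
def IsDensityOp {n : Type*} [Fintype n] [DecidableEq n] (ρ : Matrix n n ℂ) : Prop :=
  ρ.PosSemidef ∧ ρ.trace = 1

/-- Partial trace over the first tensor factor. -/
noncomputable def traceA {a b : ℕ} (M : Matrix (Fin a × Fin b) (Fin a × Fin b) ℂ) :
    Matrix (Fin b) (Fin b) ℂ :=
  Matrix.of fun j j' => ∑ i, M (i, j) (i, j')

/-- Partial trace over the second tensor factor. -/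
noncomputable def traceB {a b : ℕ} (M : Matrix (Fin a × Fin b) (Fin a × Fin b) ℂ) :
    Matrix (Fin a) (Fin a) ℂ :=
  Matrix.of fun i i' => ∑ j, M (i, j) (i', j)

/-- `n`-fold tensor (Kronecker) power of a matrix. -/
noncomputable def tensorPow {d : ℕ} (ϑ : Matrix (Fin d) (Fin d) ℂ) (n : ℕ) :
    Matrix (Fin n → Fin d) (Fin n → Fin d) ℂ :=
  Matrix.of fun f g => ∏ i, ϑ (f i) (g i)

set_option linter.unusedSectionVars false
set_option maxHeartbeats 1000000

section Aux
variable {n m : Type*} [Fintype n] [DecidableEq n] [Fintype m] [DecidableEq m]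

lemma kron_conjTranspose (A : Matrix n n ℂ) (B : Matrix m m ℂ) :
    (A ⊗ₖ B)ᴴ = Aᴴ ⊗ₖ Bᴴ := by
  ext ⟨i, j⟩ ⟨k, l⟩
  simp [conjTranspose_apply, kroneckerMap_apply, mul_comm]

lemma psd_exists_factor {A : Matrix n n ℂ} (hA : A.PosSemidef) :
    ∃ C : Matrix n n ℂ, A = Cᴴ * C := by
  open scoped MatrixOrder in
  have h0 : (0 : Matrix n n ℂ) ≤ A := hA.nonneg
  open scoped MatrixOrder in
  obtain ⟨X, hX, -, hXA⟩ := CFC.exists_sqrt_of_isSelfAdjoint_of_quasispectrumRestricts hA.1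
    (QuasispectrumRestricts.nnreal_of_nonneg h0)
  refine ⟨X, ?_⟩
  rw [← hXA, ← Matrix.star_eq_conjTranspose, hX.star_eq]

lemma kron_psd {A : Matrix n n ℂ} {B : Matrix m m ℂ}
    (hA : A.PosSemidef) (hB : B.PosSemidef) : (A ⊗ₖ B).PosSemidef := by
  obtain ⟨C, rfl⟩ := psd_exists_factor hA
  obtain ⟨D, rfl⟩ := psd_exists_factor hB
  rw [mul_kronecker_mul, ← kron_conjTranspose]
  exact posSemidef_conjTranspose_mul_self _

lemma psd_sum {ι : Type*} (s : Finset ι) (f : ι → Matrix n n ℂ)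
    (h : ∀ i ∈ s, (f i).PosSemidef) : (∑ i ∈ s, f i).PosSemidef := by
  classical
  induction s using Finset.induction with
  | empty => simpa using Matrix.PosSemidef.zero
  | insert j s hi ih =>
      rw [Finset.sum_insert hi]
      exact ((h _ (Finset.mem_insert_self _ _)).add
        (ih fun i hi' => h i (Finset.mem_insert_of_mem hi')))

lemma trace_mul_re_nonneg {A B : Matrix n n ℂ} (hA : A.PosSemidef) (hB : B.PosSemidef) :
    0 ≤ ((A * B).trace).re := by
  obtain ⟨C, rfl⟩ := psd_exists_factor hA
  rw [Matrix.mul_assoc, trace_mul_comm]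
  have h := hB.mul_mul_conjTranspose_same C
  rw [Matrix.trace, Complex.re_sum]
  refine Finset.sum_nonneg fun i _ => ?_
  have := h.re_dotProduct_nonneg (Pi.single i 1)
  simpa [Matrix.diag, dotProduct, mulVec, Pi.single_apply, Finset.sum_ite_eq,
    Finset.sum_ite_eq'] using this

lemma trace_mul_im_zero {A B : Matrix n n ℂ} (hA : A.IsHermitian) (hB : B.IsHermitian) :
    ((A * B).trace).im = 0 := by
  have h : star ((A * B).trace) = (A * B).trace := by
    rw [← trace_conjTranspose, conjTranspose_mul, hA.eq, hB.eq, trace_mul_comm]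
  have := congrArg Complex.im h
  simp only [Complex.star_def, Complex.conj_im] at this
  linarith

end Aux


lemma sum_fst_eq {a b : ℕ} (f : Fin a × Fin b → ℂ) (i : Fin a) :
    ∑ p : Fin a × Fin b, (if p.1 = i then f p else 0) = ∑ j, f (i, j) := by
  rw [Fintype.sum_prod_type, Finset.sum_comm]
  simp

lemma traceA_trace {a b : ℕ} (M : Matrix (Fin a × Fin b) (Fin a × Fin b) ℂ) :
    (traceA M).trace = M.trace := by
  simp only [Matrix.trace, Matrix.diag, traceA, of_apply, Fintype.sum_prod_type]
  exact Finset.sum_comm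

lemma traceB_herm {a b : ℕ} {M : Matrix (Fin a × Fin b) (Fin a × Fin b) ℂ}
    (hM : M.IsHermitian) : (traceB M).IsHermitian := by
  ext i i'
  simp only [conjTranspose_apply, traceB, of_apply, star_sum]
  exact Finset.sum_congr rfl fun j _ => congrFun (congrFun hM.eq (i, j)) (i', j)

lemma traceA_herm {a b : ℕ} {M : Matrix (Fin a × Fin b) (Fin a × Fin b) ℂ}
    (hM : M.IsHermitian) : (traceA M).IsHermitian := by
  ext j j'
  simp only [conjTranspose_apply, traceA, of_apply, star_sum]
  exact Finset.sum_congr rfl fun i _ => congrFun (congrFun hM.eq (i, j)) (i, j')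

lemma traceA_psd {a b : ℕ} {M : Matrix (Fin a × Fin b) (Fin a × Fin b) ℂ}
    (hM : M.PosSemidef) : (traceA M).PosSemidef := by
  refine Matrix.PosSemidef.of_dotProduct_mulVec_nonneg (traceA_herm hM.1) fun v => ?_
  set w : Fin a → Fin a × Fin b → ℂ := fun i p => if p.1 = i then v p.2 else 0 with hw
  have hstar : ∀ (c : Prop) [Decidable c] (x : ℂ),
      star (if c then x else 0) = if c then star x else 0 := by
    intros c _ x; split <;> simp
  have hmv : ∀ i p, (M *ᵥ w i) p = ∑ j', M p (i, j') * v j' := by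
    intro i p
    simp only [mulVec, dotProduct, hw, mul_ite, mul_zero]
    exact sum_fst_eq (fun p' => M p p' * v p'.2) i
  have hq : ∀ i, star (w i) ⬝ᵥ M *ᵥ w i
      = ∑ j, ∑ j', star (v j) * (M (i, j) (i, j') * v j') := by
    intro i
    simp only [dotProduct, Pi.star_apply, hw, hstar, ite_mul, zero_mul]
    rw [sum_fst_eq (fun p => star (v p.2) * (M *ᵥ w i) p) i]
    exact Finset.sum_congr rfl fun j _ => by rw [hmv, Finset.mul_sum]
  have hlhs : star v ⬝ᵥ traceA M *ᵥ v
      = ∑ i, ∑ j, ∑ j', star (v j) * (M (i, j) (i, j') * v j') := by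
    simp only [dotProduct, mulVec, traceA, of_apply, Pi.star_apply]
    simp only [Finset.sum_mul, Finset.mul_sum]
    rw [Finset.sum_congr rfl fun j (_ : j ∈ Finset.univ) =>
      (Finset.sum_comm : ∑ j' : Fin b, ∑ i : Fin a, star (v j) * (M (i, j) (i, j') * v j')
        = ∑ i, ∑ j', star (v j) * (M (i, j) (i, j') * v j')), Finset.sum_comm]
  rw [hlhs, Finset.sum_congr rfl fun i (_ : i ∈ Finset.univ) => (hq i).symm]
  exact Finset.sum_nonneg fun i _ => hM.dotProduct_mulVec_nonneg (w i)



section KronLin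
variable {n m : Type*} [Fintype n] [DecidableEq n] [Fintype m] [DecidableEq m]

lemma kron_sub_right (A : Matrix n n ℂ) (B C : Matrix m m ℂ) :
    A ⊗ₖ (B - C) = A ⊗ₖ B - A ⊗ₖ C := by
  ext ⟨i, j⟩ ⟨k, l⟩
  simp [kroneckerMap_apply, mul_sub]

lemma sub_kron_left (A B : Matrix n n ℂ) (C : Matrix m m ℂ) :
    (A - B) ⊗ₖ C = A ⊗ₖ C - B ⊗ₖ C := by
  ext ⟨i, j⟩ ⟨k, l⟩
  simp [kroneckerMap_apply, sub_mul]

lemma kron_sum_left {ι : Type*} (s : Finset ι) (f : ι → Matrix n n ℂ) (B : Matrix m m ℂ) :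
    (∑ i ∈ s, f i) ⊗ₖ B = ∑ i ∈ s, f i ⊗ₖ B := by
  ext ⟨i, j⟩ ⟨k, l⟩
  simp [kroneckerMap_apply, Matrix.sum_apply, Finset.sum_mul]

end KronLin


section Key
variable {n : Type*} [Fintype n] [DecidableEq n]

lemma conj_mul_conj (U X Y : Matrix n n ℂ) (hU : star U * U = 1) :
    (U * X * star U) * (U * Y * star U) = U * (X * Y) * star U := by
  simp only [Matrix.mul_assoc]
  rw [← Matrix.mul_assoc (star U) U, hU, Matrix.one_mul]

lemma trace_conj (U X : Matrix n n ℂ) (hU : star U * U = 1) :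
    (U * X * star U).trace = X.trace := by
  rw [trace_mul_cycle, hU, Matrix.one_mul]

lemma key_bound (A P : Matrix n n ℂ) (hA : A.IsHermitian)
    (hP : P.PosSemidef) (hP1 : ((1 : Matrix n n ℂ) - P).PosSemidef) :
    ((P * A).trace).re ≤ ((posProj A * A).trace).re := by
  set U : Matrix n n ℂ := (hA.eigenvectorUnitary : Matrix n n ℂ) with hUdef
  have hU : star U * U = 1 := Matrix.mem_unitaryGroup_iff'.mp hA.eigenvectorUnitary.2
  have hU2 : U * star U = 1 := Matrix.mem_unitaryGroup_iff.mp hA.eigenvectorUnitary.2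
  set lam := hA.eigenvalues with hlam
  set D : Matrix n n ℂ := Matrix.diagonal (RCLike.ofReal ∘ lam) with hD
  set Dp : Matrix n n ℂ := Matrix.diagonal (fun i => if (0:ℝ) ≤ lam i then (1:ℂ) else 0) with hDp
  have hspec : A = U * D * star U := hA.spectral_theorem
  have hproj : posProj A = U * Dp * star U := by rw [posProj, dif_pos hA]
  clear_value U lam
  -- RHS value
  have hrhs : ((posProj A * A).trace).re = ∑ i, if (0:ℝ) ≤ lam i then lam i else 0 := by
    have h1 : posProj A * A = U * (Dp * D) * star U := by
      rw [hproj]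
      conv_lhs => rw [hspec]
      exact conj_mul_conj U Dp D hU
    rw [h1, trace_conj U _ hU, hDp, hD, Matrix.diagonal_mul_diagonal]
    simp only [Matrix.trace_diagonal]
    rw [Complex.re_sum]
    refine Finset.sum_congr rfl fun i _ => ?_
    by_cases h : (0:ℝ) ≤ lam i <;> simp [h]
  -- LHS value
  set N : Matrix n n ℂ := star U * P * U with hN
  have hPis : P = U * N * star U := by
    rw [hN]
    calc P = 1 * P * 1 := by rw [Matrix.one_mul, Matrix.mul_one]
      _ = (U * star U) * P * (U * star U) := by rw [hU2]
      _ = U * (star U * P * U) * star U := by simp only [Matrix.mul_assoc]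
  have hlhs : ((P * A).trace).re = ∑ i, (N i i).re * lam i := by
    have h1 : P * A = U * (N * D) * star U := by
      conv_lhs => rw [hPis, hspec]
      exact conj_mul_conj U N D hU
    rw [h1, trace_conj U _ hU]
    have h2 : (N * D).trace = ∑ i, N i i * (lam i : ℂ) := by
      simp [Matrix.trace, Matrix.diag, hD, Matrix.mul_diagonal]
    rw [h2, Complex.re_sum]
    refine Finset.sum_congr rfl fun i _ => ?_
    simp [Complex.mul_re]
  -- diagonal bounds
  have hdiag : ∀ i, 0 ≤ (N i i).re ∧ (N i i).re ≤ 1 := by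
    intro i
    set u : n → ℂ := fun k => U k i with hu
    have hNi : N i i = star u ⬝ᵥ P *ᵥ u := by
      simp only [hN, Matrix.mul_apply, dotProduct, mulVec, Pi.star_apply, hu,
        Matrix.star_apply, Finset.sum_mul, Finset.mul_sum]
      rw [Finset.sum_comm]
      exact Finset.sum_congr rfl fun k _ => Finset.sum_congr rfl fun l _ => by ring
    have huu : star u ⬝ᵥ u = 1 := by
      have : star u ⬝ᵥ u = (star U * U) i i := by
        simp [dotProduct, Matrix.mul_apply, Matrix.star_apply, hu]
      rw [this, hU, Matrix.one_apply_eq]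
    have h0 : (0:ℂ) ≤ star u ⬝ᵥ P *ᵥ u := hP.dotProduct_mulVec_nonneg u
    have h1' : (0:ℂ) ≤ star u ⬝ᵥ ((1 : Matrix n n ℂ) - P) *ᵥ u := hP1.dotProduct_mulVec_nonneg u
    rw [Matrix.sub_mulVec, dotProduct_sub, Matrix.one_mulVec, huu] at h1'
    constructor
    · rw [hNi]; exact (Complex.le_def.mp h0).1
    · rw [hNi]
      have := (Complex.le_def.mp h1').1
      simp only [Complex.zero_re, Complex.sub_re, Complex.one_re] at this
      linarith
  rw [hlhs, hrhs]
  refine Finset.sum_le_sum fun i _ => ?_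
  obtain ⟨h0, h1⟩ := hdiag i
  by_cases h : (0:ℝ) ≤ lam i
  · simp only [if_pos h]
    nlinarith
  · simp only [if_neg h]
    nlinarith [le_of_not_ge h]

end Key


theorem classical_capacity_converse_bound {a q : ℕ}
    (ρAQ : Matrix (Fin a × Fin q) (Fin a × Fin q) ℂ) (hρ : IsDensityOp ρAQ)
    (hsep : ∃ (k : ℕ) (w : Fin k → ℝ) (σA : Fin k → Matrix (Fin a) (Fin a) ℂ)
        (σQ : Fin k → Matrix (Fin q) (Fin q) ℂ),
        (∀ i, 0 ≤ w i) ∧ (∀ i, (σA i).PosSemidef) ∧ (∀ i, (σQ i).PosSemidef) ∧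
        ρAQ = ∑ i, (w i : ℂ) • (σA i ⊗ₖ σQ i))
    (ρA : Matrix (Fin a) (Fin a) ℂ) (hρA : ρA = traceB ρAQ)
    (ρQ : Matrix (Fin q) (Fin q) ℂ) (hρQ : ρQ = traceA ρAQ)
    (M : ℕ) (hM : 0 < M)
    (EA : Fin M → Matrix (Fin a) (Fin a) ℂ) (hEA : ∀ i, (EA i).PosSemidef)
    (hEAsum : ((1 : Matrix (Fin a) (Fin a) ℂ) - ∑ i, EA i).PosSemidef)
    (hEAunif : ∀ i, ((EA i * ρA).trace).re = 1 / M)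
    (EQ : Fin M → Matrix (Fin q) (Fin q) ℂ) (hEQ : ∀ i, (EQ i).PosSemidef)
    (hEQsum : ((1 : Matrix (Fin q) (Fin q) ℂ) - ∑ i, EQ i).PosSemidef)
    (γ : ℝ) :
    (∑ i, (((EA i ⊗ₖ EQ i) * ρAQ).trace).re
        ≤ ((posProj (ρAQ - (Real.exp γ : ℂ) • (ρA ⊗ₖ ρQ))
              * (ρAQ - (Real.exp γ : ℂ) • (ρA ⊗ₖ ρQ))).trace).re
          + Real.exp γ / M * ∑ i, ((EQ i * ρQ).trace).re)
    ∧ ((posProj (ρAQ - (Real.exp γ : ℂ) • (ρA ⊗ₖ ρQ))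
          * (ρAQ - (Real.exp γ : ℂ) • (ρA ⊗ₖ ρQ))).trace).re
        + Real.exp γ / M * ∑ i, ((EQ i * ρQ).trace).re
      ≤ ((posProj (ρAQ - (Real.exp γ : ℂ) • (ρA ⊗ₖ ρQ))
            * (ρAQ - (Real.exp γ : ℂ) • (ρA ⊗ₖ ρQ))).trace).re
        + Real.exp γ / M := by
  classical
  clear hsep
  set Pi' : Matrix (Fin a × Fin q) (Fin a × Fin q) ℂ
    := ρAQ - (Real.exp γ : ℂ) • (ρA ⊗ₖ ρQ) with hPi'
  set P : Matrix (Fin a × Fin q) (Fin a × Fin q) ℂ := ∑ i, EA i ⊗ₖ EQ i with hPdef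
  have hρAh : ρA.IsHermitian := hρA ▸ traceB_herm hρ.1.1
  have hρQpsd : ρQ.PosSemidef := hρQ ▸ traceA_psd hρ.1
  have hρQh : ρQ.IsHermitian := hρQpsd.1
  have hPiH : Pi'.IsHermitian := by
    rw [hPi']
    refine IsHermitian.sub hρ.1.1 ?_
    rw [Matrix.IsHermitian, conjTranspose_smul, kron_conjTranspose, hρAh.eq, hρQh.eq]
    congr 1
    exact Complex.conj_ofReal _
  have hPpsd : P.PosSemidef :=
    psd_sum _ _ fun i _ => kron_psd (hEA i) (hEQ i)
  have hEQi1 : ∀ i, ((1 : Matrix (Fin q) (Fin q) ℂ) - EQ i).PosSemidef := by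
    intro i
    have hdec : (1 : Matrix (Fin q) (Fin q) ℂ) - EQ i
        = ((1 : Matrix (Fin q) (Fin q) ℂ) - ∑ j, EQ j) + ∑ j ∈ Finset.univ.erase i, EQ j := by
      rw [Finset.sum_erase_eq_sub (Finset.mem_univ i)]
      abel
    rw [hdec]
    exact (hEQsum).add (psd_sum _ _ fun j _ => hEQ j)
  have h1P : ((1 : Matrix (Fin a × Fin q) (Fin a × Fin q) ℂ) - P).PosSemidef := by
    have hdec : (1 : Matrix (Fin a × Fin q) (Fin a × Fin q) ℂ) - P
        = (∑ i, EA i ⊗ₖ ((1 : Matrix (Fin q) (Fin q) ℂ) - EQ i))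
          + ((1 : Matrix (Fin a) (Fin a) ℂ) - ∑ i, EA i) ⊗ₖ (1 : Matrix (Fin q) (Fin q) ℂ) := by
      simp only [kron_sub_right, sub_kron_left, kron_sum_left, one_kronecker_one,
        Finset.sum_sub_distrib, hPdef]
      abel
    rw [hdec]
    exact (psd_sum _ _ fun i _ => kron_psd (hEA i) (hEQi1 i)).add
      (kron_psd hEAsum Matrix.PosSemidef.one)
  -- trace identities
  have hAQ : ρAQ = Pi' + (Real.exp γ : ℂ) • (ρA ⊗ₖ ρQ) := by rw [hPi']; abel
  have him : ∀ i, ((EA i * ρA).trace).im = 0 := fun i => trace_mul_im_zero (hEA i).1 hρAh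
  have himQ : ∀ i, ((EQ i * ρQ).trace).im = 0 := fun i => trace_mul_im_zero (hEQ i).1 hρQh
  have hsplit : ∀ i, (((EA i ⊗ₖ EQ i) * ρAQ).trace).re
      = (((EA i ⊗ₖ EQ i) * Pi').trace).re
        + Real.exp γ * (1 / M * ((EQ i * ρQ).trace).re) := by
    intro i
    conv_lhs => rw [hAQ]
    rw [Matrix.mul_add, trace_add, Matrix.mul_smul, trace_smul, smul_eq_mul,
      ← mul_kronecker_mul, trace_kronecker]
    rw [Complex.add_re]
    congr 1
    rw [Complex.mul_re, Complex.mul_re, him i, himQ i, hEAunif i]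
    simp only [Complex.ofReal_re, Complex.ofReal_im, zero_mul, mul_zero, sub_zero]
  have hsum1 : ∑ i, (((EA i ⊗ₖ EQ i) * Pi').trace).re = ((P * Pi').trace).re := by
    rw [hPdef, Matrix.sum_mul, trace_sum, Complex.re_sum]
  have hkey : ((P * Pi').trace).re ≤ ((posProj Pi' * Pi').trace).re :=
    key_bound Pi' P hPiH hPpsd h1P
  have hQsum : ∑ i, ((EQ i * ρQ).trace).re ≤ 1 := by
    have hs : ∑ i, ((EQ i * ρQ).trace).re = (((∑ i, EQ i) * ρQ).trace).re := by
      rw [Matrix.sum_mul, trace_sum, Complex.re_sum]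
    have hnn : 0 ≤ ((((1 : Matrix (Fin q) (Fin q) ℂ) - ∑ i, EQ i) * ρQ).trace).re :=
      trace_mul_re_nonneg hEQsum hρQpsd
    have htr : (ρQ.trace).re = 1 := by
      rw [hρQ, traceA_trace, hρ.2]; simp
    rw [Matrix.sub_mul, Matrix.one_mul, trace_sub, Complex.sub_re] at hnn
    rw [hs]
    linarith
  have hexpnn : 0 ≤ Real.exp γ / M := div_nonneg (Real.exp_pos γ).le (by positivity)
  constructor
  · calc ∑ i, (((EA i ⊗ₖ EQ i) * ρAQ).trace).re
        = ((P * Pi').trace).re + ∑ i, Real.exp γ * (1 / M * ((EQ i * ρQ).trace).re) := by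
          rw [← hsum1, ← Finset.sum_add_distrib]
          exact Finset.sum_congr rfl fun i _ => hsplit i
      _ = ((P * Pi').trace).re + Real.exp γ / M * ∑ i, ((EQ i * ρQ).trace).re := by
          rw [Finset.mul_sum]
          congr 1
          exact Finset.sum_congr rfl fun i _ => by ring
      _ ≤ ((posProj Pi' * Pi').trace).re
          + Real.exp γ / M * ∑ i, ((EQ i * ρQ).trace).re := by
          exact add_le_add_left hkey _
  · have := mul_le_mul_of_nonneg_left hQsum hexpnn
    rw [mul_one] at this
    linarith
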